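/- Let n ≥ 1, let a = (a₁,...,aₙ) ∈ ℝⁿ be a nonzero vector, and let b ∈ ℝ. Suppose X is a real symmetric positive semidefinite n×n matrix with X_{ii} = 1 for all i ∈ {1,...,n} and aᵀXa = b. Then there exists a real symmetric positive semidefinite 2n×2n matrix X̂ with X̂_{1:n,1:n} = X satisfying: X̂_{2n,2n} = b; a₁²X̂_{1,1} − 2a₁X̂_{1,n+1} + X̂_{n+1,n+1} = 0; and for every i with 2 ≤ i ≤ n, [a_i, 1, −1] X̂_{(i,n+i−1,n+i),(i,n+i−1,n+i)} [a_i; 1; −1] = 0. -/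

import Mathlib

open Matrix

noncomputable section

/-- The quadratic form `[c, 1, −1] Y [c; 1; −1]` on the `3×3` principal submatrix of `X`
on rows/columns `r1, r2, r3`, written out entrywise. -/
def triQuad {m : Type*} (c : ℝ) (X : Matrix m m ℝ) (r1 r2 r3 : m) : ℝ :=
  c * c * X r1 r1 + c * X r1 r2 - c * X r1 r3
    + c * X r2 r1 + X r2 r2 - X r2 r3
    - c * X r3 r1 - X r3 r2 + X r3 r3

lemma gram_tri_zero {m : Type*} [Fintype m] (c : ℝ) (u v w : m → ℝ)
    (h : ∀ k, c * u k + v k - w k = 0) :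
    c * c * (∑ k, u k * u k) + c * (∑ k, u k * v k) - c * (∑ k, u k * w k)
      + c * (∑ k, v k * u k) + (∑ k, v k * v k) - (∑ k, v k * w k)
      - c * (∑ k, w k * u k) - (∑ k, w k * v k) + (∑ k, w k * w k) = 0 := by
  have e : ∀ k : m, (c * u k + v k - w k) ^ 2 =
      c * c * (u k * u k) + c * (u k * v k) - c * (u k * w k)
      + c * (v k * u k) + (v k * v k) - (v k * w k)
      - c * (w k * u k) - (w k * v k) + (w k * w k) := fun k => by ring
  have key : (∑ k, (c * u k + v k - w k) ^ 2) =
      c * c * (∑ k, u k * u k) + c * (∑ k, u k * v k) - c * (∑ k, u k * w k)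
      + c * (∑ k, v k * u k) + (∑ k, v k * v k) - (∑ k, v k * w k)
      - c * (∑ k, w k * u k) - (∑ k, w k * v k) + (∑ k, w k * w k) := by
    simp only [e, Finset.sum_add_distrib, Finset.sum_sub_distrib, ← Finset.mul_sum]
  rw [← key]
  apply Finset.sum_eq_zero
  intro k _
  rw [h k]; ring

lemma gram_two_zero {m : Type*} [Fintype m] (c : ℝ) (u v : m → ℝ)
    (h : ∀ k, v k = c * u k) :
    c ^ 2 * (∑ k, u k * u k) - 2 * c * (∑ k, u k * v k) + (∑ k, v k * v k) = 0 := by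
  have e : ∀ k : m, (c * u k - v k) ^ 2 =
      c ^ 2 * (u k * u k) - 2 * c * (u k * v k) + (v k * v k) := fun k => by ring
  have key : (∑ k, (c * u k - v k) ^ 2) =
      c ^ 2 * (∑ k, u k * u k) - 2 * c * (∑ k, u k * v k) + (∑ k, v k * v k) := by
    simp only [e, Finset.sum_add_distrib, Finset.sum_sub_distrib, ← Finset.mul_sum]
  rw [← key]
  apply Finset.sum_eq_zero
  intro k _
  rw [h k]; ring

/-- Every symmetric PSD `n×n` matrix `X` with unit diagonal and `aᵀXa = b` extends to a
symmetric PSD `2n×2n` matrix `X̂` satisfying the sparse extension constraints of the simple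
example, with `X̂_{1:n,1:n} = X`. -/
theorem original_to_sparse_extension (n : ℕ) (hn : 1 ≤ n)
    (a : Fin n → ℝ) (ha : a ≠ 0) (b : ℝ)
    (X : Matrix (Fin n) (Fin n) ℝ) (hpsd : X.PosSemidef)
    (hdiag : ∀ i, X i i = 1)
    (hb : (∑ i : Fin n, ∑ j : Fin n, a i * X i j * a j) = b) :
    ∃ Xh : Matrix (Fin (2*n)) (Fin (2*n)) ℝ,
      Xh.PosSemidef ∧
      (∀ i j : Fin n, Xh ⟨(i : ℕ), by omega⟩ ⟨(j : ℕ), by omega⟩ = X i j) ∧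
      Xh ⟨2*n - 1, by omega⟩ ⟨2*n - 1, by omega⟩ = b ∧
      (a ⟨0, by omega⟩ ^ 2 * Xh ⟨0, by omega⟩ ⟨0, by omega⟩
        - 2 * a ⟨0, by omega⟩ * Xh ⟨0, by omega⟩ ⟨n, by omega⟩
        + Xh ⟨n, by omega⟩ ⟨n, by omega⟩ = 0) ∧
      (∀ i : Fin n, 1 ≤ (i : ℕ) →
        triQuad (a i) Xh ⟨(i : ℕ), by omega⟩ ⟨n + (i : ℕ) - 1, by omega⟩
          ⟨n + (i : ℕ), by omega⟩ = 0) := by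
  obtain ⟨B, hB⟩ : ∃ B : Matrix (Fin n) (Fin n) ℝ, X = Bᴴ * B := by
    open scoped MatrixOrder in
    exact CStarAlgebra.nonneg_iff_eq_star_mul_self.mp hpsd.nonneg
  have hX : ∀ i j, X i j = ∑ k, B k i * B k j := by
    intro i j
    rw [hB]
    simp [Matrix.mul_apply, Matrix.conjTranspose_apply]
  set f : Fin (2*n) → Fin n → ℝ := fun idx k =>
    if h : (idx : ℕ) < n then B k ⟨idx, h⟩
    else ∑ j : Fin n, if (j : ℕ) + n ≤ (idx : ℕ) then a j * B k j else 0 with hf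
  -- value on the original block
  have hfi : ∀ (i : Fin n) (h : (i : ℕ) < 2*n) (k : Fin n), f ⟨(i : ℕ), h⟩ k = B k i := by
    intro i h k
    simp only [hf]
    rw [dif_pos i.isLt]
  -- value at index n (first partial sum)
  have hfn : ∀ (h : n < 2*n) (k : Fin n), f ⟨n, h⟩ k = a ⟨0, hn⟩ * B k ⟨0, hn⟩ := by
    intro h k
    simp only [hf]
    rw [dif_neg (by simp)]
    rw [Finset.sum_eq_single ⟨0, hn⟩]
    · rw [if_pos (by simp)]
    · intro j _ hj
      rw [if_neg]
      intro hc
      apply hj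
      apply Fin.ext
      simpa using by omega
    · simp
  -- recurrence for partial sums
  have hrec : ∀ (i : Fin n), 1 ≤ (i : ℕ) → ∀ (h1 : n + (i : ℕ) - 1 < 2*n) (h2 : n + (i : ℕ) < 2*n)
      (k : Fin n), f ⟨n + (i : ℕ), h2⟩ k = f ⟨n + (i : ℕ) - 1, h1⟩ k + a i * B k i := by
    intro i hi h1 h2 k
    simp only [hf]
    rw [dif_neg (by simp), dif_neg (by simp; omega)]
    have hsingle : (∑ j : Fin n, if (j : ℕ) = (i : ℕ) then a j * B k j else 0) = a i * B k i := by
      rw [Finset.sum_eq_single i]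
      · rw [if_pos rfl]
      · intro j _ hj
        rw [if_neg]
        intro hc
        exact hj (Fin.ext hc)
      · simp
    rw [← hsingle, ← Finset.sum_add_distrib]
    apply Finset.sum_congr rfl
    intro j _
    have hj := j.isLt
    have hi' := i.isLt
    split_ifs <;> first | ring1 | (exfalso; omega)
  refine ⟨Matrix.of fun i j => ∑ k, f i k * f j k, ?_, ?_, ?_, ?_, ?_⟩
  · -- PSD
    have : (Matrix.of fun i j : Fin (2*n) => ∑ k, f i k * f j k)
        = (Matrix.of fun (k : Fin n) (i : Fin (2*n)) => f i k)ᴴ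
          * (Matrix.of fun (k : Fin n) (i : Fin (2*n)) => f i k) := by
      ext i j
      simp [Matrix.mul_apply, Matrix.conjTranspose_apply]
    rw [this]
    exact Matrix.posSemidef_conjTranspose_mul_self _
  · -- top-left block
    intro i j
    simp only [Matrix.of_apply]
    rw [hX]
    apply Finset.sum_congr rfl
    intro k _
    rw [hfi, hfi]
  · -- corner = b
    simp only [Matrix.of_apply]
    have hftop : ∀ k, f ⟨2*n - 1, by omega⟩ k = ∑ j : Fin n, a j * B k j := by
      intro k
      simp only [hf]
      rw [dif_neg (by omega)]
      apply Finset.sum_congr rfl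
      intro j _
      have hj := j.isLt
      rw [if_pos (by omega)]
    calc (∑ k, f ⟨2*n-1, by omega⟩ k * f ⟨2*n-1, by omega⟩ k)
        = ∑ k, ∑ i, ∑ j, (a i * B k i) * (a j * B k j) := by
          apply Finset.sum_congr rfl
          intro k _
          rw [hftop k, Finset.sum_mul_sum]
      _ = ∑ i, ∑ j, ∑ k, (a i * B k i) * (a j * B k j) := by
          rw [Finset.sum_comm]
          apply Finset.sum_congr rfl
          intro i _
          rw [Finset.sum_comm]
      _ = ∑ i, ∑ j, a i * X i j * a j := by
          apply Finset.sum_congr rfl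
          intro i _
          apply Finset.sum_congr rfl
          intro j _
          rw [hX, Finset.mul_sum, Finset.sum_mul]
          apply Finset.sum_congr rfl
          intro k _
          ring
      _ = b := hb
  · -- first constraint
    simp only [Matrix.of_apply]
    apply gram_two_zero (a ⟨0, by omega⟩) (fun k => f ⟨0, by omega⟩ k) (fun k => f ⟨n, by omega⟩ k)
    intro k
    rw [hfn (by omega) k]
    have h0 : f ⟨0, by omega⟩ k = B k ⟨0, hn⟩ := hfi ⟨0, hn⟩ (by omega) k
    rw [h0]
  · -- recurrence constraints
    intro i hi
    simp only [triQuad, Matrix.of_apply]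
    apply gram_tri_zero (a i) (fun k => f ⟨(i : ℕ), by omega⟩ k)
      (fun k => f ⟨n + (i : ℕ) - 1, by omega⟩ k) (fun k => f ⟨n + (i : ℕ), by omega⟩ k)
    intro k
    rw [hrec i hi (by omega) (by omega) k, hfi i (by omega) k]
    ring
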